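/- For K ≥ 3, m ≥ 1, S = (m+1)(K+1), and 1 ≤ l ≤ K−1, the telescoping product ∏_{j=l}^{K−1} C_j with C_j = (S−j−2)(j+1)/((K−j)(j+2)) equals ((l+1)/(K+1)) · C(S−l−2, K−l), where C(·,·) is the binomial coefficient. -/

import Mathlib

lemma aux11 (K S : ℕ) (hS : 2 * K + 2 ≤ S) :
    ∀ d l : ℕ, l + d = K →
    ∏ j ∈ Finset.Ico l K,
        ((S : ℝ) - j - 2) * ((j : ℝ) + 1) / (((K : ℝ) - j) * ((j : ℝ) + 2))
      = (((l : ℝ) + 1) / ((K : ℝ) + 1)) * (Nat.choose (S - l - 2) (K - l) : ℝ) := by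
  intro d
  induction d with
  | zero =>
    intro l hl
    simp only [Nat.add_zero] at hl
    subst hl
    simp [Nat.choose_zero_right]
    rw [div_self (by positivity)]
  | succ d ih =>
    intro l hl
    have hlK : l < K := by omega
    rw [Finset.prod_eq_prod_Ico_succ_bot hlK]
    rw [ih (l + 1) (by omega)]
    have h1 : S - (l + 1) - 2 = S - l - 3 := by omega
    have h2 : K - (l + 1) = K - l - 1 := by omega
    rw [h1, h2]
    have hkey : ((S - l - 2 : ℕ) : ℝ) * (Nat.choose (S - l - 3) (K - l - 1) : ℝ)
        = (Nat.choose (S - l - 2) (K - l) : ℝ) * ((K - l : ℕ) : ℝ) := by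
      have := Nat.add_one_mul_choose_eq (S - l - 3) (K - l - 1)
      have e1 : S - l - 3 + 1 = S - l - 2 := by omega
      have e2 : K - l - 1 + 1 = K - l := by omega
      rw [e1, e2] at this
      exact_mod_cast congrArg (Nat.cast : ℕ → ℝ) this
    have c1 : ((S - l - 2 : ℕ) : ℝ) = (S : ℝ) - l - 2 := by
      rw [Nat.cast_sub (by omega : 2 ≤ S - l), Nat.cast_sub (by omega : l ≤ S)]; ring
    have c2 : ((K - l : ℕ) : ℝ) = (K : ℝ) - l := by
      rw [Nat.cast_sub (by omega : l ≤ K)]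
    have hKl : (K : ℝ) - l ≠ 0 := by
      rw [← c2]; exact_mod_cast Nat.sub_ne_zero_of_lt hlK
    have hl2 : ((l : ℝ) + 2) ≠ 0 := by positivity
    have hK1 : ((K : ℝ) + 1) ≠ 0 := by positivity
    rw [c1, c2] at hkey
    push_cast
    field_simp
    linear_combination ((l : ℝ) + 2) * hkey

/-- For K ≥ 3, m ≥ 1, S = (m+1)(K+1), and 1 ≤ l ≤ K−1, the telescoping product
∏_{j=l}^{K−1} C_j with C_j = (S−j−2)(j+1)/((K−j)(j+2)) equals
((l+1)/(K+1)) · C(S−l−2, K−l). -/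
theorem stmt_11 (K m l : ℕ) (hK : 3 ≤ K) (hm : 1 ≤ m) (hl : 1 ≤ l) (hlK : l ≤ K - 1)
    (S : ℕ) (hS : S = (m + 1) * (K + 1)) :
    ∏ j ∈ Finset.Ico l K,
        ((S : ℝ) - j - 2) * ((j : ℝ) + 1) / (((K : ℝ) - j) * ((j : ℝ) + 2))
      = (((l : ℝ) + 1) / ((K : ℝ) + 1)) * (Nat.choose (S - l - 2) (K - l) : ℝ) := by
  apply aux11 K S (by nlinarith) (K - l) l (by omega)
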